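/- arXiv:1510.01816 — 6 statements merged into one kernel-verified Lean document; each statement's English description precedes it below -/
import Mathlib

section
/- Every optimal point (τ*, ε*) of problem (P2) satisfies τ_i* > 0 for every i = 0, 1, …, K. -/
/-- The rate function `r(t,x) = t·log(1 + x/t)` for `t > 0`, and `r(0,x) = 0`. -/
noncomputable def rate (t x : ℝ) : ℝ := if 0 < t then t * Real.log (1 + x / t) else 0

/-- The feasible set of problem (P2): `τ_i ≥ 0`, `0 ≤ ε_i ≤ τ_i·P_P` for `0 ≤ i ≤ K`,
`Σ ε_i ≤ P_A` and `Σ τ_i ≤ 1`. -/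
def FeasibleP2 (K : ℕ) (PA PP : ℝ) (τ ε : ℕ → ℝ) : Prop :=
  (∀ i ≤ K, 0 ≤ τ i) ∧ (∀ i ≤ K, 0 ≤ ε i ∧ ε i ≤ τ i * PP) ∧
  (∑ i ∈ Finset.range (K + 1), ε i ≤ PA) ∧ (∑ i ∈ Finset.range (K + 1), τ i ≤ 1)

/-- The objective of problem (P2): `R(τ,ε) = Σ_{i=1}^K r(τ_i, γ_i·Σ_{j=0}^{i−1} ε_j)`. -/
noncomputable def ObjP2 (K : ℕ) (γ τ ε : ℕ → ℝ) : ℝ :=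
  ∑ i ∈ Finset.Icc 1 K, rate (τ i) (γ i * ∑ j ∈ Finset.range i, ε j)

lemma rate_nonneg {t x : ℝ} (hx : 0 ≤ x) : 0 ≤ rate t x := by
  unfold rate; split
  · exact mul_nonneg (by linarith) (Real.log_nonneg (by
      have : 0 ≤ x / t := div_nonneg hx (by linarith); linarith))
  · exact le_rfl

lemma rate_pos {t x : ℝ} (ht : 0 < t) (hx : 0 < x) : 0 < rate t x := by
  rw [rate, if_pos ht]
  exact mul_pos ht (Real.log_pos (by have : 0 < x / t := div_pos hx ht; linarith))

lemma rate_mono {t x y : ℝ} (hx : 0 ≤ x) (hxy : x ≤ y) : rate t x ≤ rate t y := by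
  unfold rate; split
  · rename_i ht
    have h1 : (0:ℝ) < 1 + x / t := by
      have : 0 ≤ x / t := div_nonneg hx ht.le; linarith
    have h2 : 1 + x / t ≤ 1 + y / t := by gcongr
    exact mul_le_mul_of_nonneg_left (Real.log_le_log h1 h2) ht.le
  · exact le_rfl

lemma rate_sub_le {t x y : ℝ} (hy : 0 ≤ y) (hxy : y ≤ x) : rate t x - rate t y ≤ x - y := by
  unfold rate; split
  · rename_i ht
    have hyt : (0:ℝ) < 1 + y / t := by
      have : 0 ≤ y / t := div_nonneg hy ht.le; linarith
    have hxt : (0:ℝ) < 1 + x / t := by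
      have : y / t ≤ x / t := by gcongr
      linarith
    have key : Real.log (1 + x / t) - Real.log (1 + y / t)
        ≤ (1 + x / t) / (1 + y / t) - 1 := by
      rw [← Real.log_div hxt.ne' hyt.ne']
      exact Real.log_le_sub_one_of_pos (div_pos hxt hyt)
    have hz : (1 + x / t) / (1 + y / t) - 1 = (x - y) / (t + y) := by
      field_simp; ring
    rw [hz] at key
    have h2 : t * ((x - y) / (t + y)) ≤ x - y := by
      rw [mul_div_assoc']
      rw [div_le_iff₀ (by linarith)]
      nlinarith
    calc t * Real.log (1 + x / t) - t * Real.log (1 + y / t)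
        = t * (Real.log (1 + x / t) - Real.log (1 + y / t)) := by ring
      _ ≤ t * ((x - y) / (t + y)) := mul_le_mul_of_nonneg_left key ht.le
      _ ≤ x - y := h2
  · linarith

lemma rate_lower {δ x : ℝ} (hδ : 0 < δ) (hx : 0 < x) :
    δ * (Real.log x - Real.log δ) ≤ rate δ x := by
  rw [rate, if_pos hδ, ← Real.log_div hx.ne' hδ.ne']
  exact mul_le_mul_of_nonneg_left
    (Real.log_le_log (div_pos hx hδ) (by linarith)) hδ.le

lemma rate_zero_x (t : ℝ) : rate t 0 = 0 := by
  unfold rate; split <;> simp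

lemma rate_zero_t (x : ℝ) : rate 0 x = 0 := by simp [rate]

lemma sum_update_mem {f : ℕ → ℝ} {s : Finset ℕ} {a : ℕ} (ha : a ∈ s) (v : ℝ) :
    ∑ x ∈ s, Function.update f a v x = ∑ x ∈ s, f x - f a + v := by
  rw [Finset.sum_update_of_mem ha]
  have h := Finset.sum_eq_sum_sdiff_singleton_add ha f
  linarith

lemma sum_update_not_mem {f : ℕ → ℝ} {s : Finset ℕ} {a : ℕ} (ha : a ∉ s) (v : ℝ) :
    ∑ x ∈ s, Function.update f a v x = ∑ x ∈ s, f x :=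
  Finset.sum_congr rfl fun x hx => Function.update_of_ne (by rintro rfl; exact ha hx) _ _

set_option maxHeartbeats 1000000 in
/-- Every optimal point `(τ*, ε*)` of problem (P2) satisfies `τ_i* > 0` for every
`i = 0, 1, …, K`. -/
theorem stmt0 (K : ℕ) (hK : 1 ≤ K) (γ : ℕ → ℝ)
    (hγ : ∀ i, 1 ≤ i → i ≤ K → 0 < γ i)
    (PA PP : ℝ) (hPA : 0 < PA) (hPP : PA < PP)
    (τ ε : ℕ → ℝ) (hfeas : FeasibleP2 K PA PP τ ε)
    (hopt : ∀ τ' ε' : ℕ → ℝ, FeasibleP2 K PA PP τ' ε' →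
      ObjP2 K γ τ' ε' ≤ ObjP2 K γ τ ε) :
    ∀ i ≤ K, 0 < τ i := by
  obtain ⟨hτ, hε, hεsum, hτsum⟩ := hfeas
  have hPP0 : 0 < PP := hPA.trans hPP
  -- Step 1: the optimal value is positive
  have hobj : 0 < ObjP2 K γ τ ε := by
    have hKpos : (0:ℝ) < (K:ℝ) + 1 := by positivity
    set e0 : ℝ := min PA (PP / ((K:ℝ) + 1)) with he0def
    have he0 : 0 < e0 := lt_min hPA (div_pos hPP0 hKpos)
    set τw : ℕ → ℝ := fun _ => ((K:ℝ) + 1)⁻¹ with hτwdef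
    set εw : ℕ → ℝ := fun i => if i = 0 then e0 else 0 with hεwdef
    have hτwval : ∀ i, τw i = ((K:ℝ) + 1)⁻¹ := fun i => rfl
    have hεwnn : ∀ i, 0 ≤ εw i := by
      intro i; rw [hεwdef]; dsimp only; split
      · exact he0.le
      · exact le_rfl
    have hfw : FeasibleP2 K PA PP τw εw := by
      refine ⟨fun i _ => by rw [hτwval i]; positivity, fun i _ => ⟨hεwnn i, ?_⟩, ?_, ?_⟩
      · rw [hτwval i, hεwdef]; dsimp only; split
        · calc e0 ≤ PP / ((K:ℝ) + 1) := min_le_right _ _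
            _ = ((K:ℝ) + 1)⁻¹ * PP := by rw [div_eq_inv_mul]
        · positivity
      · have : ∑ i ∈ Finset.range (K + 1), εw i = e0 := by
          rw [hεwdef]
          rw [Finset.sum_ite_eq' (Finset.range (K + 1)) 0 (fun _ => e0)]
          simp
        rw [this]; exact min_le_left _ _
      · have : ∑ i ∈ Finset.range (K + 1), τw i = 1 := by
          rw [hτwdef, Finset.sum_const, Finset.card_range, nsmul_eq_mul]
          push_cast
          rw [mul_inv_cancel₀ (by positivity)]
        rw [this]
    have h1 : 0 < ObjP2 K γ τw εw := by
      unfold ObjP2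
      apply Finset.sum_pos'
      · intro i hi
        obtain ⟨hi1, hiK⟩ := Finset.mem_Icc.mp hi
        exact rate_nonneg (mul_nonneg (hγ i hi1 hiK).le
          (Finset.sum_nonneg fun j _ => hεwnn j))
      · refine ⟨1, Finset.mem_Icc.mpr ⟨le_refl 1, hK⟩, ?_⟩
        have hs : ∑ j ∈ Finset.range 1, εw j = e0 := by
          rw [Finset.sum_range_one, hεwdef]; simp
        rw [hs, hτwval 1]
        exact rate_pos (by positivity) (mul_pos (hγ 1 le_rfl hK) he0)
    exact lt_of_lt_of_le h1 (hopt τw εw hfw)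
  -- Step 2: ε 0 > 0
  have hε0 : 0 < ε 0 := by
    by_contra hcon
    push_neg at hcon
    have hε00 : ε 0 = 0 := le_antisymm hcon (hε 0 (Nat.zero_le K)).1
    classical
    by_cases hex : ∃ j, (1 ≤ j ∧ j ≤ K) ∧ 0 < ε j
    · set j := Nat.find hex with hjdef
      obtain ⟨⟨hj1, hjK⟩, hjpos⟩ := Nat.find_spec hex
      have hj0 : j ≠ 0 := by omega
      have hzero : ∀ i < j, ε i = 0 := by
        intro i hi
        rcases Nat.eq_zero_or_pos i with rfl | hi1
        · exact hε00
        · have hmin := Nat.find_min hex hi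
          push_neg at hmin
          have hiK : i ≤ K := le_trans hi.le hjK
          exact le_antisymm (hmin ⟨hi1, hiK⟩) (hε i hiK).1
      have hτj : 0 < τ j := by
        by_contra hc; push_neg at hc
        have h2 := (hε j hjK).2
        nlinarith [mul_nonpos_of_nonpos_of_nonneg hc hPP0.le]
      set δ : ℝ := min (ε j) (τ j * PP / 2) with hδdef
      have hδpos : 0 < δ := lt_min hjpos (by positivity)
      have hδε : δ ≤ ε j := min_le_left _ _
      have hδτ : δ ≤ τ j * PP / 2 := min_le_right _ _
      have hδPP : δ / PP ≤ τ j / 2 := by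
        calc δ / PP ≤ (τ j * PP / 2) / PP := by gcongr
          _ = τ j / 2 := by field_simp
      have hδPP0 : 0 < δ / PP := div_pos hδpos hPP0
      set τ' : ℕ → ℝ := Function.update (Function.update τ 0 (τ 0 + δ / PP)) j (τ j - δ / PP)
        with hτ'def
      set ε' : ℕ → ℝ := Function.update (Function.update ε 0 δ) j (ε j - δ) with hε'def
      have hτ'j : τ' j = τ j - δ / PP := by rw [hτ'def, Function.update_self]
      have hτ'0 : τ' 0 = τ 0 + δ / PP := by
        rw [hτ'def, Function.update_of_ne (Ne.symm hj0), Function.update_self]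
      have hτ'k : ∀ i, i ≠ 0 → i ≠ j → τ' i = τ i := by
        intro i h0 hj'
        rw [hτ'def, Function.update_of_ne hj', Function.update_of_ne h0]
      have hε'j : ε' j = ε j - δ := by rw [hε'def, Function.update_self]
      have hε'0 : ε' 0 = δ := by
        rw [hε'def, Function.update_of_ne (Ne.symm hj0), Function.update_self]
      have hε'k : ∀ i, i ≠ 0 → i ≠ j → ε' i = ε i := by
        intro i h0 hj'
        rw [hε'def, Function.update_of_ne hj', Function.update_of_ne h0]
      have h0memK : (0:ℕ) ∈ Finset.range (K + 1) := by simp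
      have hjmemK : j ∈ Finset.range (K + 1) := by simp; omega
      have hfeas' : FeasibleP2 K PA PP τ' ε' := by
        refine ⟨?_, ?_, ?_, ?_⟩
        · intro i hiK
          rcases eq_or_ne i j with rfl | hij
          · rw [hτ'j]; linarith
          · rcases eq_or_ne i 0 with rfl | hi0
            · rw [hτ'0]; have := hτ 0 (Nat.zero_le K); linarith
            · rw [hτ'k i hi0 hij]; exact hτ i hiK
        · intro i hiK
          rcases eq_or_ne i j with rfl | hij
          · rw [hε'j, hτ'j]
            have h2 := (hε j hiK).2
            constructor
            · linarith
            · have heq : (τ j - δ / PP) * PP = τ j * PP - δ := by field_simp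
              rw [heq]; linarith
          · rcases eq_or_ne i 0 with rfl | hi0
            · rw [hε'0, hτ'0]
              have h1 := hτ 0 (Nat.zero_le K)
              have heq : (τ 0 + δ / PP) * PP = τ 0 * PP + δ := by field_simp
              constructor
              · exact hδpos.le
              · rw [heq]; nlinarith
            · rw [hε'k i hi0 hij, hτ'k i hi0 hij]; exact hε i hiK
        · rw [hε'def, sum_update_mem hjmemK, sum_update_mem h0memK,
            Function.update_of_ne hj0]
          linarith
        · rw [hτ'def, sum_update_mem hjmemK, sum_update_mem h0memK,
            Function.update_of_ne hj0]
          linarith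
      have hSmono : ∀ k, 1 ≤ k → (∑ x ∈ Finset.range k, ε x) ≤ ∑ x ∈ Finset.range k, ε' x := by
        intro k hk1
        have h0mem : (0:ℕ) ∈ Finset.range k := Finset.mem_range.mpr (by omega)
        rw [hε'def]
        by_cases hjk : j < k
        · rw [sum_update_mem (Finset.mem_range.mpr hjk), sum_update_mem h0mem,
            Function.update_of_ne hj0]
          linarith
        · push_neg at hjk
          rw [sum_update_not_mem (by simp; omega), sum_update_mem h0mem]
          linarith
      have hS'j : ∑ x ∈ Finset.range j, ε' x = δ := by
        rw [hε'def, sum_update_not_mem (by simp), sum_update_mem (Finset.mem_range.mpr (by omega))]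
        have hz : ∑ x ∈ Finset.range j, ε x = 0 :=
          Finset.sum_eq_zero fun x hx => hzero x (Finset.mem_range.mp hx)
        rw [hz, hε00]; ring
      have hSj : ∑ x ∈ Finset.range j, ε x = 0 :=
        Finset.sum_eq_zero fun x hx => hzero x (Finset.mem_range.mp hx)
      have hobj' : ObjP2 K γ τ ε < ObjP2 K γ τ' ε' := by
        unfold ObjP2
        apply Finset.sum_lt_sum
        · intro i hi
          obtain ⟨hi1, hiK⟩ := Finset.mem_Icc.mp hi
          rcases eq_or_ne i j with rfl | hij
          · rw [hSj, mul_zero, rate_zero_x]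
            exact rate_nonneg (mul_nonneg (hγ j hi1 hiK).le
              (Finset.sum_nonneg fun x hx =>
                (hfeas'.2.1 x (by have := Finset.mem_range.mp hx; omega)).1))
          · rw [hτ'k i (by omega) hij]
            exact rate_mono
              (mul_nonneg (hγ i hi1 hiK).le
                (Finset.sum_nonneg fun x hx => (hε x (by have := Finset.mem_range.mp hx; omega)).1))
              (mul_le_mul_of_nonneg_left (hSmono i hi1) (hγ i hi1 hiK).le)
        · refine ⟨j, Finset.mem_Icc.mpr ⟨hj1, hjK⟩, ?_⟩
          rw [hSj, mul_zero, rate_zero_x, hτ'j, hS'j]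
          exact rate_pos (by linarith) (mul_pos (hγ j hj1 hjK) hδpos)
      exact absurd (hopt τ' ε' hfeas') (not_le.mpr hobj')
    · push_neg at hex
      have hz : ∀ i ≤ K, ε i = 0 := by
        intro i hiK
        rcases Nat.eq_zero_or_pos i with rfl | hi1
        · exact hε00
        · exact le_antisymm (hex i ⟨hi1, hiK⟩) (hε i hiK).1
      have hO : ObjP2 K γ τ ε = 0 := by
        unfold ObjP2
        apply Finset.sum_eq_zero
        intro i hi
        obtain ⟨hi1, hiK⟩ := Finset.mem_Icc.mp hi
        have hs : ∑ j ∈ Finset.range i, ε j = 0 :=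
          Finset.sum_eq_zero fun x hx => hz x (by have := Finset.mem_range.mp hx; omega)
        rw [hs, mul_zero, rate_zero_x]
      linarith
  have hτ0 : 0 < τ 0 := by
    by_contra h
    push_neg at h
    have : τ 0 * PP ≤ 0 := mul_nonpos_of_nonpos_of_nonneg h hPP0.le
    have := (hε 0 (Nat.zero_le K)).2
    linarith
  -- Step 3
  intro m hm
  rcases Nat.eq_zero_or_pos m with rfl | hm1
  · exact hτ0
  by_contra h
  push_neg at h
  have hτm : τ m = 0 := le_antisymm h (hτ m hm)
  have hm0 : m ≠ 0 := by omega
  classical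
  have hSm : ε 0 ≤ ∑ j ∈ Finset.range m, ε j := Finset.single_le_sum
    (fun i hi => (hε i (by have := Finset.mem_range.mp hi; omega)).1)
    (Finset.mem_range.mpr hm1)
  have hSmpos : 0 < ∑ j ∈ Finset.range m, ε j := lt_of_lt_of_le hε0 hSm
  set G : ℝ := ∑ k ∈ Finset.Icc 1 K, γ k with hGdef
  have hG : 0 ≤ G := by
    rw [hGdef]
    exact Finset.sum_nonneg fun k hk =>
      (hγ k (Finset.mem_Icc.mp hk).1 (Finset.mem_Icc.mp hk).2).le
  have hγm := hγ m hm1 hm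
  set A : ℝ := γ m * (∑ j ∈ Finset.range m, ε j) / 2 with hAdef
  have hA : 0 < A := by rw [hAdef]; positivity
  set δ : ℝ := min (min (τ 0 / 2) ((∑ j ∈ Finset.range m, ε j) / (2 * PP)))
    (Real.exp (Real.log A - PP * G - 1)) with hδdef
  have hδpos : 0 < δ := lt_min (lt_min (by linarith) (by positivity)) (Real.exp_pos _)
  have hδ1 : δ ≤ τ 0 / 2 := le_trans (min_le_left _ _) (min_le_left _ _)
  have hδ2 : δ * PP ≤ (∑ j ∈ Finset.range m, ε j) / 2 := by
    have hle : δ ≤ (∑ j ∈ Finset.range m, ε j) / (2 * PP) :=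
      le_trans (min_le_left _ _) (min_le_right _ _)
    calc δ * PP ≤ ((∑ j ∈ Finset.range m, ε j) / (2 * PP)) * PP := by gcongr
      _ = (∑ j ∈ Finset.range m, ε j) / 2 := by field_simp
  have hδ3 : Real.log δ ≤ Real.log A - PP * G - 1 := by
    calc Real.log δ ≤ Real.log (Real.exp (Real.log A - PP * G - 1)) :=
          Real.log_le_log hδpos (min_le_right _ _)
      _ = Real.log A - PP * G - 1 := Real.log_exp _
  set d : ℝ := ε 0 * δ / τ 0 with hddef
  have hd0 : 0 ≤ d := by rw [hddef]; positivity
  have hεtop := (hε 0 (Nat.zero_le K)).2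
  have hdPP : d ≤ δ * PP := by
    rw [hddef, div_le_iff₀ hτ0]
    nlinarith
  have hdε0 : d ≤ ε 0 := by
    rw [hddef, div_le_iff₀ hτ0]
    nlinarith
  set ε' : ℕ → ℝ := Function.update ε 0 (ε 0 - d) with hε'def
  set τ' : ℕ → ℝ := Function.update (Function.update τ 0 (τ 0 - δ)) m δ with hτ'def
  have hτ'm : τ' m = δ := by rw [hτ'def, Function.update_self]
  have hτ'0 : τ' 0 = τ 0 - δ := by
    rw [hτ'def, Function.update_of_ne (Ne.symm hm0), Function.update_self]
  have hτ'k : ∀ i, i ≠ 0 → i ≠ m → τ' i = τ i := fun i h0 hm' => by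
    rw [hτ'def, Function.update_of_ne hm', Function.update_of_ne h0]
  have hε'0 : ε' 0 = ε 0 - d := by rw [hε'def, Function.update_self]
  have hε'k : ∀ i, i ≠ 0 → ε' i = ε i := fun i h0 => by
    rw [hε'def, Function.update_of_ne h0]
  have h0memK : (0:ℕ) ∈ Finset.range (K + 1) := by simp
  have hmmemK : m ∈ Finset.range (K + 1) := by simp; omega
  have hεm : ε m = 0 := by
    have h1 := (hε m hm).1
    have h2 := (hε m hm).2
    rw [hτm, zero_mul] at h2
    linarith
  have hfeas' : FeasibleP2 K PA PP τ' ε' := by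
    refine ⟨?_, ?_, ?_, ?_⟩
    · intro i hiK
      rcases eq_or_ne i m with rfl | him
      · rw [hτ'm]; exact hδpos.le
      · rcases eq_or_ne i 0 with rfl | hi0
        · rw [hτ'0]; linarith
        · rw [hτ'k i hi0 him]; exact hτ i hiK
    · intro i hiK
      rcases eq_or_ne i 0 with rfl | hi0
      · rw [hε'0, hτ'0]
        refine ⟨by linarith, ?_⟩
        have hkey : d * τ 0 = ε 0 * δ := by rw [hddef]; field_simp
        nlinarith [mul_le_mul_of_nonneg_right hεtop
          (sub_nonneg.mpr (by linarith : δ ≤ τ 0))]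
      · rcases eq_or_ne i m with rfl | him
        · rw [hε'k i hm0, hτ'm, hεm]
          refine ⟨le_rfl, by positivity⟩
        · rw [hε'k i hi0, hτ'k i hi0 him]; exact hε i hiK
    · rw [hε'def, sum_update_mem h0memK]; linarith
    · rw [hτ'def, sum_update_mem hmmemK, sum_update_mem h0memK,
        Function.update_of_ne hm0]
      linarith
  have hS' : ∀ k, 1 ≤ k →
      ∑ x ∈ Finset.range k, ε' x = (∑ x ∈ Finset.range k, ε x) - d := by
    intro k hk1
    rw [hε'def, sum_update_mem (Finset.mem_range.mpr (by omega))]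
    ring
  have hSnn : ∀ k, 1 ≤ k → k ≤ K → d ≤ ∑ x ∈ Finset.range k, ε x := by
    intro k hk1 hkK
    have h := Finset.single_le_sum (f := ε)
      (fun i hi => (hε i (by have := Finset.mem_range.mp hi; omega)).1)
      (Finset.mem_range.mpr (by omega : 0 < k))
    linarith
  have hmem : m ∈ Finset.Icc 1 K := Finset.mem_Icc.mpr ⟨hm1, hm⟩
  have hgain : δ * (PP * G + 1) ≤
      rate (τ' m) (γ m * ∑ x ∈ Finset.range m, ε' x)
        - rate (τ m) (γ m * ∑ x ∈ Finset.range m, ε x) := by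
    rw [hτm, rate_zero_t, sub_zero, hτ'm, hS' m hm1]
    have h1 : A ≤ γ m * ((∑ x ∈ Finset.range m, ε x) - d) := by
      rw [hAdef]
      nlinarith
    calc δ * (PP * G + 1) ≤ δ * (Real.log A - Real.log δ) := by
          apply mul_le_mul_of_nonneg_left _ hδpos.le
          linarith
      _ ≤ rate δ A := rate_lower hδpos hA
      _ ≤ rate δ (γ m * ((∑ x ∈ Finset.range m, ε x) - d)) := rate_mono hA.le h1
  have hloss : ∀ i ∈ Finset.Icc 1 K \ {m},
      -(γ i * (δ * PP)) ≤
        rate (τ' i) (γ i * ∑ x ∈ Finset.range i, ε' x)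
          - rate (τ i) (γ i * ∑ x ∈ Finset.range i, ε x) := by
    intro i hi
    obtain ⟨hi', him⟩ := Finset.mem_sdiff.mp hi
    obtain ⟨hi1, hiK⟩ := Finset.mem_Icc.mp hi'
    have him' : i ≠ m := by simpa using him
    rw [hτ'k i (by omega) him', hS' i hi1]
    have hγi := hγ i hi1 hiK
    have hdk := hSnn i hi1 hiK
    have hr := rate_sub_le (t := τ i) (x := γ i * ∑ x ∈ Finset.range i, ε x)
      (y := γ i * ((∑ x ∈ Finset.range i, ε x) - d))
      (mul_nonneg hγi.le (by linarith)) (by nlinarith)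
    nlinarith [mul_le_mul_of_nonneg_left hdPP hγi.le]
  have hsum1 : -(δ * PP * G) ≤
      ∑ i ∈ Finset.Icc 1 K \ {m},
        (rate (τ' i) (γ i * ∑ x ∈ Finset.range i, ε' x)
          - rate (τ i) (γ i * ∑ x ∈ Finset.range i, ε x)) := by
    refine le_trans ?_ (Finset.sum_le_sum hloss)
    rw [Finset.sum_neg_distrib, ← Finset.sum_mul]
    have hsub : ∑ i ∈ Finset.Icc 1 K \ {m}, γ i ≤ G := by
      rw [hGdef]
      exact Finset.sum_le_sum_of_subset_of_nonneg Finset.sdiff_subset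
        (fun i hi _ => (hγ i (Finset.mem_Icc.mp hi).1 (Finset.mem_Icc.mp hi).2).le)
    have hsubnn : 0 ≤ ∑ i ∈ Finset.Icc 1 K \ {m}, γ i :=
      Finset.sum_nonneg fun i hi =>
        (hγ i (Finset.mem_Icc.mp (Finset.mem_sdiff.mp hi).1).1
          (Finset.mem_Icc.mp (Finset.mem_sdiff.mp hi).1).2).le
    have := mul_le_mul_of_nonneg_right hsub (by positivity : (0:ℝ) ≤ δ * PP)
    nlinarith
  have hobj' : ObjP2 K γ τ ε < ObjP2 K γ τ' ε' := by
    have hdiff : 0 < ObjP2 K γ τ' ε' - ObjP2 K γ τ ε := by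
      unfold ObjP2
      rw [← Finset.sum_sub_distrib, Finset.sum_eq_sum_sdiff_singleton_add hmem]
      have hexp : δ * (PP * G + 1) = δ * PP * G + δ := by ring
      linarith [hgain, hsum1]
    linarith
  exact absurd (hopt τ' ε' hfeas') (not_le.mpr hobj')
end

section
/- If (τ*, ε*) is an optimal point of problem (P2) and ε_S* > 0 for some index 0 ≤ S ≤ K, then ε_i* = τ_i*·P_P for every index 0 ≤ i ≤ S−1. -/
lemma rate_strict {t x y : ℝ} (ht : 0 < t) (hx : 0 ≤ x) (hxy : x < y) :
    rate t x < rate t y := by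
  unfold rate
  rw [if_pos ht, if_pos ht]
  have h1 : (0:ℝ) < 1 + x / t := by positivity
  have h2 : 1 + x / t < 1 + y / t := by gcongr
  exact mul_lt_mul_of_pos_left (Real.log_lt_log h1 h2) ht

/-- If `(τ*, ε*)` is optimal for (P2) and `ε_S* > 0` for some `0 ≤ S ≤ K`, then
`ε_i* = τ_i*·P_P` for every `0 ≤ i ≤ S−1`. -/
theorem stmt3 (K : ℕ) (hK : 1 ≤ K) (γ : ℕ → ℝ)
    (hγ : ∀ i, 1 ≤ i → i ≤ K → 0 < γ i)
    (PA PP : ℝ) (hPA : 0 < PA) (hPP : PA < PP)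
    (τ ε : ℕ → ℝ) (hfeas : FeasibleP2 K PA PP τ ε)
    (hopt : ∀ τ' ε' : ℕ → ℝ, FeasibleP2 K PA PP τ' ε' →
      ObjP2 K γ τ' ε' ≤ ObjP2 K γ τ ε)
    (S : ℕ) (hS : S ≤ K) (hεS : 0 < ε S) :
    ∀ i < S, ε i = τ i * PP := by
  obtain ⟨hτpos, hεb, hεsum, hτsum⟩ := hfeas
  have hPP0 : 0 < PP := hPA.trans hPP
  intro i hiS
  by_contra hne
  have hiK : i ≤ K := le_trans hiS.le hS
  have hεi := hεb i hiK
  have hlt : ε i < τ i * PP := lt_of_le_of_ne hεi.2 hne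
  have hτS : 0 < τ S := by
    by_contra h
    push_neg at h
    have := (hεb S hS).2
    nlinarith [hτpos S hS]
  set δ : ℝ := min (ε S) (τ i * PP - ε i) with hδdef
  have hδ : 0 < δ := lt_min hεS (by linarith)
  have hδ1 : δ ≤ ε S := min_le_left _ _
  have hδ2 : δ ≤ τ i * PP - ε i := min_le_right _ _
  have hiNe : i ≠ S := hiS.ne
  set ε' : ℕ → ℝ := Function.update (Function.update ε i (ε i + δ)) S (ε S - δ) with hε'def
  have hε'i : ε' i = ε i + δ := by
    simp [hε'def, Function.update, hiNe]
  have hε'S : ε' S = ε S - δ := by simp [hε'def]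
  have hε'other : ∀ j, j ≠ i → j ≠ S → ε' j = ε j := by
    intro j h1 h2
    simp [hε'def, Function.update, h1, h2]
  -- sums of ε' over various finsets
  have hnone : ∀ t : Finset ℕ, i ∉ t → S ∉ t →
      ∑ j ∈ t, ε' j = ∑ j ∈ t, ε j := by
    intro t h1 h2
    refine Finset.sum_congr rfl fun j hj => ?_
    exact hε'other j (fun h => h1 (h ▸ hj)) (fun h => h2 (h ▸ hj))
  have honlyi : ∀ t : Finset ℕ, i ∈ t → S ∉ t →
      ∑ j ∈ t, ε' j = (∑ j ∈ t, ε j) + δ := by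
    intro t h1 h2
    rw [← Finset.sum_erase_add _ _ h1, ← Finset.sum_erase_add _ _ h1, hε'i]
    rw [hnone _ (Finset.notMem_erase i t) (fun h => h2 (Finset.mem_of_mem_erase h))]
    ring
  have hboth : ∀ t : Finset ℕ, i ∈ t → S ∈ t →
      ∑ j ∈ t, ε' j = ∑ j ∈ t, ε j := by
    intro t h1 h2
    rw [← Finset.sum_erase_add _ _ h2, ← Finset.sum_erase_add _ _ h2, hε'S]
    rw [honlyi _ (Finset.mem_erase.mpr ⟨hiNe, h1⟩) (Finset.notMem_erase S t)]
    ring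
  -- feasibility of (τ, ε')
  have hfeas' : FeasibleP2 K PA PP τ ε' := by
    refine ⟨hτpos, ?_, ?_, hτsum⟩
    · intro j hjK
      rcases eq_or_ne j i with rfl | h1
      · rw [hε'i]; constructor
        · linarith [hεi.1]
        · linarith
      rcases eq_or_ne j S with rfl | h2
      · rw [hε'S]; constructor
        · linarith
        · linarith [(hεb j hS).2]
      · rw [hε'other j h1 h2]; exact hεb j hjK
    · rw [hboth _ (Finset.mem_range.mpr (by omega)) (Finset.mem_range.mpr (by omega))]
      exact hεsum
  -- objective strictly increases
  have hεnn : ∀ m, m ≤ K → 0 ≤ ∑ j ∈ Finset.range m, ε j := by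
    intro m hm
    exact Finset.sum_nonneg fun j hj => (hεb j (by
      have := Finset.mem_range.mp hj; omega)).1
  have hobj : ObjP2 K γ τ ε < ObjP2 K γ τ ε' := by
    unfold ObjP2
    have hSmem : S ∈ Finset.Icc 1 K := Finset.mem_Icc.mpr ⟨by omega, hS⟩
    apply Finset.sum_lt_sum
    · intro m hm
      rw [Finset.mem_Icc] at hm
      have hγm : 0 < γ m := hγ m hm.1 hm.2
      have hxnn : 0 ≤ γ m * ∑ j ∈ Finset.range m, ε j :=
        mul_nonneg hγm.le (hεnn m hm.2)
      rcases le_or_gt m i with h1 | h1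
      · rw [hnone _ (by simp; omega) (by simp; omega)]
      rcases le_or_gt m S with h2 | h2
      · rw [honlyi _ (Finset.mem_range.mpr h1) (by simp; omega)]
        exact rate_mono hxnn (by nlinarith)
      · rw [hboth _ (Finset.mem_range.mpr (by omega)) (Finset.mem_range.mpr h2)]
    · refine ⟨S, hSmem, ?_⟩
      have hγS : 0 < γ S := hγ S (by omega) hS
      rw [honlyi _ (Finset.mem_range.mpr hiS) (by simp)]
      exact rate_strict hτS (mul_nonneg hγS.le (hεnn S hS)) (by nlinarith)
  have := hopt τ ε' hfeas'
  linarith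
end

section
/- Every maximizer τ* of G over the feasible set satisfies Σ_{i=1}^n τ_i* = S, τ_i* > 0 for all i, and γ_i/τ_i* = γ_j/τ_j* for all indices i, j; consequently, τ_i* = S·γ_i / (Σ_{j=1}^n γ_j) is the unique maximizer of G over the feasible set. -/
/-- The objective `G(τ) = Σ_{i=1}^n r(τ_i, γ_i·P_A)`. -/
noncomputable def ObjG (n : ℕ) (γ : ℕ → ℝ) (PA : ℝ) (τ : ℕ → ℝ) : ℝ :=
  ∑ i ∈ Finset.Icc 1 n, rate (τ i) (γ i * PA)

/-- The feasible set: `τ_i ≥ 0` for `1 ≤ i ≤ n` and `Σ_{i=1}^n τ_i ≤ S`. -/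
def FeasibleG (n : ℕ) (S : ℝ) (τ : ℕ → ℝ) : Prop :=
  (∀ i, 1 ≤ i → i ≤ n → 0 ≤ τ i) ∧ ∑ i ∈ Finset.Icc 1 n, τ i ≤ S

noncomputable def fAux (a t : ℝ) : ℝ := t * Real.log (t + a) - t * Real.log t

lemma rate_eq_fAux (a : ℝ) (ha : 0 < a) {t : ℝ} (ht : 0 ≤ t) : rate t a = fAux a t := by
  rcases eq_or_lt_of_le ht with h | h
  · simp [rate, fAux, ← h]
  · have ht0 : t ≠ 0 := h.ne'
    unfold rate fAux
    rw [if_pos h, show (1 : ℝ) + a / t = (t + a) / t by field_simp,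
      Real.log_div (by positivity) ht0]
    ring

lemma hasDerivAt_fAux (a : ℝ) (ha : 0 < a) {t : ℝ} (ht : 0 < t) :
    HasDerivAt (fAux a) (Real.log (t + a) + t / (t + a) - Real.log t - 1) t := by
  have hta : (0:ℝ) < t + a := by linarith
  have h1 : HasDerivAt (fun s : ℝ => s + a) 1 t := (hasDerivAt_id t).add_const a
  have h2 : HasDerivAt (fun s : ℝ => s * Real.log (s + a))
      (1 * Real.log (t + a) + t * (1 / (t + a))) t :=
    (hasDerivAt_id t).mul (h1.log hta.ne')
  have h3 : HasDerivAt (fun s : ℝ => s * Real.log s) (1 * Real.log t + t * t⁻¹) t :=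
    (hasDerivAt_id t).mul (Real.hasDerivAt_log ht.ne')
  have := h2.sub h3
  refine this.congr_deriv ?_
  field_simp
  ring

noncomputable def fAux' (a t : ℝ) : ℝ := Real.log (t + a) + t / (t + a) - Real.log t - 1

lemma hasDerivAt_fAux' (a : ℝ) (ha : 0 < a) {t : ℝ} (ht : 0 < t) :
    HasDerivAt (fAux' a) (-a ^ 2 / (t * (t + a) ^ 2)) t := by
  have hta : (0:ℝ) < t + a := by linarith
  have h1 : HasDerivAt (fun s : ℝ => s + a) 1 t := (hasDerivAt_id t).add_const a
  have h2 : HasDerivAt (fun s : ℝ => Real.log (s + a)) (1 / (t + a)) t := h1.log hta.ne'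
  have h3 : HasDerivAt (fun s : ℝ => s / (s + a))
      ((1 * (t + a) - t * 1) / (t + a) ^ 2) t := (hasDerivAt_id t).div h1 hta.ne'
  have h4 : HasDerivAt (fun s : ℝ => Real.log s) t⁻¹ t := Real.hasDerivAt_log ht.ne'
  have := ((h2.add h3).sub h4).sub_const 1
  refine this.congr_deriv ?_
  field_simp
  ring

lemma strictConcaveOn_rate (a : ℝ) (ha : 0 < a) :
    StrictConcaveOn ℝ (Set.Ici 0) (fun t => rate t a) := by
  have hf : StrictConcaveOn ℝ (Set.Ici 0) (fAux a) := by
    apply strictConcaveOn_of_deriv2_neg (convex_Ici 0)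
    · have h1 : ContinuousOn (fun t : ℝ => t * Real.log (t + a)) (Set.Ici 0) := by
        apply continuousOn_id.mul
        apply ContinuousOn.log (by fun_prop)
        intro x hx
        have : (0:ℝ) ≤ x := hx
        positivity
      exact h1.sub Real.continuous_mul_log.continuousOn
    · intro x hx
      rw [interior_Ici] at hx
      have hx0 : (0:ℝ) < x := hx
      have hev : deriv (fAux a) =ᶠ[nhds x] fAux' a := by
        filter_upwards [Ioi_mem_nhds hx0] with y hy
        exact (hasDerivAt_fAux a ha hy).deriv
      have : deriv^[2] (fAux a) x = deriv (fAux' a) x := by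
        simp only [Function.iterate_succ, Function.iterate_zero, Function.comp_apply, id]
        exact hev.deriv_eq
      rw [this, (hasDerivAt_fAux' a ha hx0).deriv]
      have h1 : (0:ℝ) < x * (x + a) ^ 2 := by positivity
      have h2 : (0:ℝ) < a ^ 2 := by positivity
      exact div_neg_of_neg_of_pos (by linarith) h1
  refine ⟨convex_Ici 0, fun x hx y hy hxy p q hp hq hpq => ?_⟩
  have hmem : p • x + q • y ∈ Set.Ici 0 := (convex_Ici 0) hx hy hp.le hq.le hpq
  have hmem' : (0:ℝ) ≤ p * x + q * y := by simpa using hmem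
  simp only [smul_eq_mul]
  rw [rate_eq_fAux a ha hx, rate_eq_fAux a ha hy, rate_eq_fAux a ha hmem']
  have := hf.2 hx hy hxy hp hq hpq
  simpa using this

lemma hasDerivAt_rate (a : ℝ) (ha : 0 < a) {t : ℝ} (ht : 0 < t) :
    HasDerivAt (fun s => rate s a)
      (Real.log (1 + a / t) - (a / t) / (1 + a / t)) t := by
  have hta : (0:ℝ) < t + a := by linarith
  have hEq : (fun s => rate s a) =ᶠ[nhds t] fAux a := by
    filter_upwards [Ioi_mem_nhds ht] with y hy
    exact rate_eq_fAux a ha hy.le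
  have h := (hasDerivAt_fAux a ha ht).congr_of_eventuallyEq hEq
  refine h.congr_deriv ?_
  have ht0 : t ≠ 0 := ht.ne'
  rw [show (1 : ℝ) + a / t = (t + a) / t by field_simp,
    Real.log_div hta.ne' ht0]
  field_simp
  ring

lemma key_log_ineq {u : ℝ} (hu : 0 < u) : 0 ≤ Real.log (1 + u) - u / (1 + u) := by
  have h1u : (0:ℝ) < 1 + u := by linarith
  have h1 : Real.log (1 / (1 + u)) ≤ 1 / (1 + u) - 1 :=
    Real.log_le_sub_one_of_pos (by positivity)
  rw [Real.log_div one_ne_zero h1u.ne', Real.log_one] at h1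
  have h2 : (1:ℝ) / (1 + u) - 1 = -(u / (1 + u)) := by field_simp; ring
  linarith [h2 ▸ h1]

lemma opt_candidate (n : ℕ) (hn : 1 ≤ n) (γ : ℕ → ℝ)
    (hγ : ∀ i, 1 ≤ i → i ≤ n → 0 < γ i) (PA S : ℝ) (hPA : 0 < PA) (hS : 0 < S)
    (τ' : ℕ → ℝ) (hf : FeasibleG n S τ') :
    ObjG n γ PA τ' ≤ ObjG n γ PA (fun i => S * γ i / ∑ j ∈ Finset.Icc 1 n, γ j) := by
  set Γ : ℝ := ∑ j ∈ Finset.Icc 1 n, γ j with hΓdef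
  have hne : (Finset.Icc 1 n).Nonempty := by
    rw [Finset.nonempty_Icc]; exact hn
  have hγ' : ∀ i ∈ Finset.Icc 1 n, 0 < γ i := fun i hi => by
    rw [Finset.mem_Icc] at hi; exact hγ i hi.1 hi.2
  have hΓ : 0 < Γ := Finset.sum_pos hγ' hne
  set c : ℕ → ℝ := fun i => S * γ i / Γ with hcdef
  have hc_pos : ∀ i ∈ Finset.Icc 1 n, 0 < c i := fun i hi => by
    have := hγ' i hi; positivity
  have hc_sum : ∑ i ∈ Finset.Icc 1 n, c i = S := by
    rw [hcdef]
    rw [← Finset.sum_div]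
    rw [← Finset.mul_sum, ← hΓdef]
    field_simp
  set u : ℝ := Γ * PA / S with hudef
  have hu : 0 < u := by positivity
  set K : ℝ := Real.log (1 + u) - u / (1 + u) with hKdef
  have hK : 0 ≤ K := key_log_ineq hu
  set d : ℕ → ℝ := fun i => τ' i - c i with hddef
  set h : ℝ → ℝ := fun s => ∑ i ∈ Finset.Icc 1 n, rate (c i + s * d i) (γ i * PA) with hhdef
  -- derivative
  have hderiv : HasDerivAt h (∑ i ∈ Finset.Icc 1 n, K * d i) 0 := by
    apply HasDerivAt.fun_sum
    intro i hi
    have ha : 0 < γ i * PA := by have := hγ' i hi; positivity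
    have hci := hc_pos i hi
    have hinner : HasDerivAt (fun s : ℝ => c i + s * d i) (d i) 0 := by
      simpa using ((hasDerivAt_id 0).mul_const (d i)).const_add (c i)
    have houter := hasDerivAt_rate (γ i * PA) ha hci
    have hval : c i + (0:ℝ) * d i = c i := by ring
    have hcomp := HasDerivAt.comp (0:ℝ) (hval ▸ houter) hinner
    have hratio : γ i * PA / c i = u := by
      have hgi := (hγ' i hi).ne'
      rw [hcdef, hudef]
      field_simp
    rw [hval] at hcomp
    rw [hratio] at hcomp
    exact hcomp
  have hD : (∑ i ∈ Finset.Icc 1 n, K * d i) = K * (∑ i ∈ Finset.Icc 1 n, τ' i - S) := by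
    rw [← Finset.mul_sum]
    congr 1
    rw [hddef]
    rw [Finset.sum_sub_distrib, hc_sum]
  have h0 : h 0 = ObjG n γ PA c := by
    rw [hhdef]; unfold ObjG
    apply Finset.sum_congr rfl
    intro i _
    norm_num
  -- slope bound via concavity
  have hslope : ∀ s ∈ Set.Ioc (0:ℝ) 1,
      ObjG n γ PA τ' - ObjG n γ PA c ≤ (h s - h 0) / s := by
    intro s hs
    obtain ⟨hs0, hs1⟩ := hs
    have hbound : (1 - s) * ObjG n γ PA c + s * ObjG n γ PA τ' ≤ h s := by
      rw [hhdef]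
      unfold ObjG
      rw [Finset.mul_sum, Finset.mul_sum, ← Finset.sum_add_distrib]
      apply Finset.sum_le_sum
      intro i hi
      have ha : 0 < γ i * PA := by have := hγ' i hi; positivity
      have hconc := (strictConcaveOn_rate (γ i * PA) ha).concaveOn
      have hx : c i ∈ Set.Ici (0:ℝ) := (hc_pos i hi).le
      have hy : τ' i ∈ Set.Ici (0:ℝ) := by
        rw [Finset.mem_Icc] at hi; exact hf.1 i hi.1 hi.2
      have := hconc.2 hx hy (by linarith : (0:ℝ) ≤ 1 - s) hs0.le (by ring)
      simp only [smul_eq_mul] at this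
      have heq : (1 - s) * c i + s * τ' i = c i + s * d i := by rw [hddef]; ring
      rw [heq] at this
      exact this
    rw [h0, le_div_iff₀ hs0]
    nlinarith [hbound]
  -- limit
  have htend : Filter.Tendsto (slope h 0) (nhdsWithin 0 (Set.Ioi 0))
      (nhds (∑ i ∈ Finset.Icc 1 n, K * d i)) := by
    have := hasDerivAt_iff_tendsto_slope.1 hderiv
    exact this.mono_left (nhdsWithin_mono 0 (fun x hx => ne_of_gt hx))
  have hle : ObjG n γ PA τ' - ObjG n γ PA c ≤ ∑ i ∈ Finset.Icc 1 n, K * d i := by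
    apply ge_of_tendsto htend
    filter_upwards [Ioc_mem_nhdsGT zero_lt_one] with s hs
    rw [slope_def_field, sub_zero]
    exact hslope s hs
  have hfinal : K * (∑ i ∈ Finset.Icc 1 n, τ' i - S) ≤ 0 :=
    mul_nonpos_iff.2 (Or.inl ⟨hK, sub_nonpos.2 hf.2⟩)
  rw [hD] at hle
  have : ObjG n γ PA c = ObjG n γ PA (fun i => S * γ i / Γ) := rfl
  linarith [this ▸ hle]

/-- Every maximizer `τ*` of `G` over the feasible set satisfies `Σ τ_i* = S`,
`τ_i* > 0` for all `i`, and `γ_i/τ_i* = γ_j/τ_j*` for all `i, j`; consequently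
`τ_i* = S·γ_i / (Σ_{j=1}^n γ_j)`, i.e. the maximizer is unique. -/
theorem stmt6 (n : ℕ) (hn : 1 ≤ n) (γ : ℕ → ℝ)
    (hγ : ∀ i, 1 ≤ i → i ≤ n → 0 < γ i)
    (PA S : ℝ) (hPA : 0 < PA) (hS : 0 < S)
    (τ : ℕ → ℝ) (hfeas : FeasibleG n S τ)
    (hopt : ∀ τ' : ℕ → ℝ, FeasibleG n S τ' → ObjG n γ PA τ' ≤ ObjG n γ PA τ) :
    (∑ i ∈ Finset.Icc 1 n, τ i = S) ∧
    (∀ i, 1 ≤ i → i ≤ n → 0 < τ i) ∧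
    (∀ i j, 1 ≤ i → i ≤ n → 1 ≤ j → j ≤ n → γ i / τ i = γ j / τ j) ∧
    (∀ i, 1 ≤ i → i ≤ n → τ i = S * γ i / ∑ j ∈ Finset.Icc 1 n, γ j) := by
  have hne : (Finset.Icc 1 n).Nonempty := by rw [Finset.nonempty_Icc]; exact hn
  have hγ' : ∀ i ∈ Finset.Icc 1 n, 0 < γ i := fun i hi => by
    rw [Finset.mem_Icc] at hi; exact hγ i hi.1 hi.2
  have hΓ : 0 < ∑ j ∈ Finset.Icc 1 n, γ j := Finset.sum_pos hγ' hne
  set Γ : ℝ := ∑ j ∈ Finset.Icc 1 n, γ j with hΓdef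
  set c : ℕ → ℝ := fun i => S * γ i / Γ with hcdef
  have hc_pos : ∀ i ∈ Finset.Icc 1 n, 0 < c i := fun i hi => by
    have := hγ' i hi; positivity
  have hc_sum : ∑ i ∈ Finset.Icc 1 n, c i = S := by
    rw [hcdef, ← Finset.sum_div, ← Finset.mul_sum, ← hΓdef]
    field_simp
  have hc_feas : FeasibleG n S c := by
    constructor
    · intro i h1 h2
      exact (hc_pos i (Finset.mem_Icc.2 ⟨h1, h2⟩)).le
    · rw [hc_sum]
  -- values are equal
  have hGeq : ObjG n γ PA τ = ObjG n γ PA c :=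
    le_antisymm (opt_candidate n hn γ hγ PA S hPA hS τ hfeas) (hopt c hc_feas)
  -- τ = c on Icc
  have hall : ∀ i, 1 ≤ i → i ≤ n → τ i = c i := by
    by_contra hcon
    push_neg at hcon
    obtain ⟨k, hk1, hk2, hkne⟩ := hcon
    have hkmem : k ∈ Finset.Icc 1 n := Finset.mem_Icc.2 ⟨hk1, hk2⟩
    set m : ℕ → ℝ := fun i => (τ i + c i) / 2 with hmdef
    have hm_feas : FeasibleG n S m := by
      constructor
      · intro i h1 h2
        have h3 := hfeas.1 i h1 h2
        have h4 := (hc_pos i (Finset.mem_Icc.2 ⟨h1, h2⟩)).le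
        rw [hmdef]; dsimp only; linarith
      · rw [hmdef]
        have : ∑ i ∈ Finset.Icc 1 n, (τ i + c i) / 2
            = (∑ i ∈ Finset.Icc 1 n, τ i + ∑ i ∈ Finset.Icc 1 n, c i) / 2 := by
          rw [← Finset.sum_add_distrib, Finset.sum_div]
        rw [this, hc_sum]
        have := hfeas.2
        linarith
    have hlt : ObjG n γ PA τ < ObjG n γ PA m := by
      have hhalf : (ObjG n γ PA τ + ObjG n γ PA c) / 2
          < ObjG n γ PA m := by
        unfold ObjG
        rw [← Finset.sum_add_distrib, Finset.sum_div]
        apply Finset.sum_lt_sum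
        · intro i hi
          have ha : 0 < γ i * PA := by have := hγ' i hi; positivity
          have hconc := (strictConcaveOn_rate (γ i * PA) ha).concaveOn
          rw [Finset.mem_Icc] at hi
          have hx : τ i ∈ Set.Ici (0:ℝ) := hfeas.1 i hi.1 hi.2
          have hy : c i ∈ Set.Ici (0:ℝ) :=
            (hc_pos i (Finset.mem_Icc.2 hi)).le
          have := hconc.2 hx hy (by norm_num : (0:ℝ) ≤ 1/2)
            (by norm_num : (0:ℝ) ≤ 1/2) (by norm_num)
          simp only [smul_eq_mul] at this
          have heq : (1:ℝ)/2 * τ i + 1/2 * c i = m i := by rw [hmdef]; ring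
          rw [heq] at this
          calc (rate (τ i) (γ i * PA) + rate (c i) (γ i * PA)) / 2
              = 1/2 * rate (τ i) (γ i * PA) + 1/2 * rate (c i) (γ i * PA) := by ring
            _ ≤ rate (m i) (γ i * PA) := this
        · refine ⟨k, hkmem, ?_⟩
          have ha : 0 < γ k * PA := by have := hγ' k hkmem; positivity
          have hconc := strictConcaveOn_rate (γ k * PA) ha
          have hx : τ k ∈ Set.Ici (0:ℝ) := hfeas.1 k hk1 hk2
          have hy : c k ∈ Set.Ici (0:ℝ) := (hc_pos k hkmem).le
          have := hconc.2 hx hy hkne (by norm_num : (0:ℝ) < 1/2)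
            (by norm_num : (0:ℝ) < 1/2) (by norm_num)
          simp only [smul_eq_mul] at this
          have heq : (1:ℝ)/2 * τ k + 1/2 * c k = m k := by rw [hmdef]; ring
          rw [heq] at this
          calc (rate (τ k) (γ k * PA) + rate (c k) (γ k * PA)) / 2
              = 1/2 * rate (τ k) (γ k * PA) + 1/2 * rate (c k) (γ k * PA) := by ring
            _ < rate (m k) (γ k * PA) := this
      linarith [hGeq]
    exact absurd (hopt m hm_feas) (not_le.2 hlt)
  refine ⟨?_, ?_, ?_, ?_⟩
  · have : ∑ i ∈ Finset.Icc 1 n, τ i = ∑ i ∈ Finset.Icc 1 n, c i :=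
      Finset.sum_congr rfl (fun i hi => by
        rw [Finset.mem_Icc] at hi; exact hall i hi.1 hi.2)
    rw [this, hc_sum]
  · intro i h1 h2
    rw [hall i h1 h2]
    exact hc_pos i (Finset.mem_Icc.2 ⟨h1, h2⟩)
  · intro i j h1 h2 h3 h4
    rw [hall i h1 h2, hall j h3 h4, hcdef]
    have hgi := (hγ i h1 h2).ne'
    have hgj := (hγ j h3 h4).ne'
    dsimp only
    have hS0 : S ≠ 0 := hS.ne'
    have hΓ0 : Γ ≠ 0 := hΓ.ne'
    field_simp
  · intro i h1 h2
    exact hall i h1 h2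
end

section
/- Let E > 0, T > 0, and γ1, γ2 > 0. The function φ(t) = t·log(1 + γ1·E/t) + (T−t)·log(1 + γ2·E/(T−t)) defined on the open interval (0,T) attains its maximum over (0,T) at t* = γ1·T/(γ1+γ2); that is, φ(t) ≤ φ(γ1·T/(γ1+γ2)) for every t ∈ (0,T). -/
/-- For `E, T, γ1, γ2 > 0`, the function
`φ(t) = t·log(1 + γ1·E/t) + (T−t)·log(1 + γ2·E/(T−t))` on `(0,T)` attains its maximum
at `t* = γ1·T/(γ1+γ2)`: `φ(t) ≤ φ(t*)` for every `t ∈ (0,T)`. -/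
theorem stmt10 (E T γ1 γ2 : ℝ) (hE : 0 < E) (hT : 0 < T) (h1 : 0 < γ1) (h2 : 0 < γ2) :
    ∀ t ∈ Set.Ioo (0 : ℝ) T,
      t * Real.log (1 + γ1 * E / t) + (T - t) * Real.log (1 + γ2 * E / (T - t)) ≤
        (γ1 * T / (γ1 + γ2)) * Real.log (1 + γ1 * E / (γ1 * T / (γ1 + γ2))) +
        (T - γ1 * T / (γ1 + γ2)) * Real.log (1 + γ2 * E / (T - γ1 * T / (γ1 + γ2))) := by
  rintro t ⟨ht0, htT⟩
  have hs : 0 < T - t := by linarith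
  have hγ : 0 < γ1 + γ2 := by linarith
  set c : ℝ := (γ1 + γ2) * E / T with hc
  have hts : T - γ1 * T / (γ1 + γ2) = γ2 * T / (γ1 + γ2) := by
    field_simp; ring
  have hA : γ1 * E / (γ1 * T / (γ1 + γ2)) = c := by
    rw [hc]; field_simp
  have hB : γ2 * E / (γ2 * T / (γ1 + γ2)) = c := by
    rw [hc]; field_simp
  have hRHS : (γ1 * T / (γ1 + γ2)) * Real.log (1 + γ1 * E / (γ1 * T / (γ1 + γ2))) +
      (T - γ1 * T / (γ1 + γ2)) * Real.log (1 + γ2 * E / (T - γ1 * T / (γ1 + γ2))) =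
      T * Real.log (1 + c) := by
    rw [hts, hA, hB]
    field_simp
  rw [hRHS]
  have hx : (1 : ℝ) + γ1 * E / t ∈ Set.Ioi (0 : ℝ) := by
    have : 0 < γ1 * E / t := by positivity
    simp only [Set.mem_Ioi]; linarith
  have hy : (1 : ℝ) + γ2 * E / (T - t) ∈ Set.Ioi (0 : ℝ) := by
    have : 0 < γ2 * E / (T - t) := by positivity
    simp only [Set.mem_Ioi]; linarith
  have ha : (0 : ℝ) ≤ t / T := by positivity
  have hb : (0 : ℝ) ≤ (T - t) / T := by positivity
  have hab : t / T + (T - t) / T = 1 := by field_simp; ring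
  have key := strictConcaveOn_log_Ioi.concaveOn.2 hx hy ha hb hab
  simp only [smul_eq_mul] at key
  have hmix : t / T * (1 + γ1 * E / t) + (T - t) / T * (1 + γ2 * E / (T - t)) = 1 + c := by
    rw [hc]; field_simp; ring
  rw [hmix] at key
  have key' := mul_le_mul_of_nonneg_left key hT.le
  calc t * Real.log (1 + γ1 * E / t) + (T - t) * Real.log (1 + γ2 * E / (T - t))
      = T * (t / T * Real.log (1 + γ1 * E / t) + (T - t) / T * Real.log (1 + γ2 * E / (T - t))) := by
        field_simp
    _ ≤ T * Real.log (1 + c) := key'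
end

section
/- For every optimal point (τ*, ε_D*, ε_U*) of problem (P1∞) and every index 1 ≤ i ≤ K with τ_i* > 0, the energy-causality constraint is tight: ε_{U,i}* = η_i·g_{D,i}·Σ_{j=0}^{i−1} ε_{D,j}*. -/
/-- Feasible set of problem (P1∞): `τ_i ≥ 0`, `0 ≤ ε_{D,i} ≤ τ_i·P_P` for `0 ≤ i ≤ K`,
`ε_{U,i} ≥ 0` for `1 ≤ i ≤ K`, `Σ ε_{D,i} ≤ P_A`, `Σ τ_i ≤ 1`, and the energy-causality
constraints `ε_{U,i} ≤ η_i·g_{D,i}·Σ_{j=0}^{i−1} ε_{D,j}`. -/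
def FeasibleP1inf (K : ℕ) (PA PP : ℝ) (η gD : ℕ → ℝ) (τ εD εU : ℕ → ℝ) : Prop :=
  (∀ i ≤ K, 0 ≤ τ i) ∧ (∀ i ≤ K, 0 ≤ εD i ∧ εD i ≤ τ i * PP) ∧
  (∀ i, 1 ≤ i → i ≤ K → 0 ≤ εU i) ∧
  (∑ i ∈ Finset.range (K + 1), εD i ≤ PA) ∧ (∑ i ∈ Finset.range (K + 1), τ i ≤ 1) ∧
  (∀ i, 1 ≤ i → i ≤ K → εU i ≤ η i * gD i * ∑ j ∈ Finset.range i, εD j)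

/-- Objective of (P1∞): `Σ_{i=1}^K r(τ_i, (g_{U,i}/σ_i²)·ε_{U,i})`. -/
noncomputable def ObjP1 (K : ℕ) (gU σ2 : ℕ → ℝ) (τ εU : ℕ → ℝ) : ℝ :=
  ∑ i ∈ Finset.Icc 1 K, rate (τ i) (gU i / σ2 i * εU i)

lemma rate_lt_rate {t x1 x2 : ℝ} (ht : 0 < t) (h1 : 0 ≤ x1) (h : x1 < x2) :
    rate t x1 < rate t x2 := by
  simp only [rate, if_pos ht]
  have h1' : (0:ℝ) < 1 + x1 / t := by positivity
  exact mul_lt_mul_of_pos_left (Real.log_lt_log h1' (by gcongr)) ht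

/-- For every optimal point of (P1∞) and every `1 ≤ i ≤ K` with `τ_i* > 0`, the
energy-causality constraint is tight: `ε_{U,i}* = η_i·g_{D,i}·Σ_{j=0}^{i−1} ε_{D,j}*`. -/
theorem stmt11 (K : ℕ) (hK : 1 ≤ K) (η gD gU σ2 : ℕ → ℝ)
    (hη : ∀ i, 1 ≤ i → i ≤ K → 0 < η i) (hgD : ∀ i, 1 ≤ i → i ≤ K → 0 < gD i)
    (hgU : ∀ i, 1 ≤ i → i ≤ K → 0 < gU i) (hσ2 : ∀ i, 1 ≤ i → i ≤ K → 0 < σ2 i)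
    (PA PP : ℝ) (hPA : 0 < PA) (hPP : PA < PP)
    (τ εD εU : ℕ → ℝ) (hfeas : FeasibleP1inf K PA PP η gD τ εD εU)
    (hopt : ∀ τ' εD' εU' : ℕ → ℝ, FeasibleP1inf K PA PP η gD τ' εD' εU' →
      ObjP1 K gU σ2 τ' εU' ≤ ObjP1 K gU σ2 τ εU) :
    ∀ i, 1 ≤ i → i ≤ K → 0 < τ i →
      εU i = η i * gD i * ∑ j ∈ Finset.range i, εD j := by
  intro i hi1 hiK hτi
  obtain ⟨hτ0, hεD, hεU0, hsum, hτsum, hcaus⟩ := hfeas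
  by_contra hne
  have hlt : εU i < η i * gD i * ∑ j ∈ Finset.range i, εD j :=
    lt_of_le_of_ne (hcaus i hi1 hiK) hne
  set B := η i * gD i * ∑ j ∈ Finset.range i, εD j with hB
  have hB0 : 0 ≤ B := le_trans (hεU0 i hi1 hiK) (le_of_lt hlt)
  set εU' := Function.update εU i B with hεU'
  have hfeas' : FeasibleP1inf K PA PP η gD τ εD εU' := by
    refine ⟨hτ0, hεD, ?_, hsum, hτsum, ?_⟩
    · intro j hj1 hjK
      rcases eq_or_ne j i with rfl | hji
      · simpa [hεU'] using hB0
      · simpa [hεU', Function.update_of_ne hji] using hεU0 j hj1 hjK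
    · intro j hj1 hjK
      rcases eq_or_ne j i with rfl | hji
      · simp [hεU', hB]
      · simpa [hεU', Function.update_of_ne hji] using hcaus j hj1 hjK
  have hc : 0 < gU i / σ2 i := div_pos (hgU i hi1 hiK) (hσ2 i hi1 hiK)
  have hobj : ObjP1 K gU σ2 τ εU < ObjP1 K gU σ2 τ εU' := by
    apply Finset.sum_lt_sum
    · intro j hj
      rcases eq_or_ne j i with rfl | hji
      · simp only [hεU', Function.update_self]
        exact le_of_lt (rate_lt_rate hτi
          (mul_nonneg (le_of_lt hc) (hεU0 j hi1 hiK))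
          (by exact mul_lt_mul_of_pos_left hlt hc))
      · simp [hεU', Function.update_of_ne hji]
    · refine ⟨i, Finset.mem_Icc.mpr ⟨hi1, hiK⟩, ?_⟩
      simp only [hεU', Function.update_self]
      exact rate_lt_rate hτi (mul_nonneg (le_of_lt hc) (hεU0 i hi1 hiK))
        (mul_lt_mul_of_pos_left hlt hc)
  exact absurd (hopt τ εD εU' hfeas') (not_le.mpr hobj)
end

section
/- Every optimal point (τ*, ε_D*, ε_U*) of problem (P1) with finite storage capacities satisfies ε_{D,0}* = τ_0*·P_P. -/
/-- Feasible set of problem (P1) with finite storage: `τ_i ≥ 0`,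
`0 ≤ ε_{D,i} ≤ τ_i·P_P` for `0 ≤ i ≤ K`, `0 ≤ ε_{U,i} ≤ B_i` for `1 ≤ i ≤ K`,
`Σ ε_{D,i} ≤ P_A`, `Σ τ_i ≤ 1`, and `ε_{U,i} ≤ η_i·g_{D,i}·Σ_{j=0}^{i−1} ε_{D,j}`. -/
def FeasibleP1 (K : ℕ) (PA PP : ℝ) (η gD B : ℕ → ℝ) (τ εD εU : ℕ → ℝ) : Prop :=
  (∀ i ≤ K, 0 ≤ τ i) ∧ (∀ i ≤ K, 0 ≤ εD i ∧ εD i ≤ τ i * PP) ∧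
  (∀ i, 1 ≤ i → i ≤ K → 0 ≤ εU i ∧ εU i ≤ B i) ∧
  (∑ i ∈ Finset.range (K + 1), εD i ≤ PA) ∧ (∑ i ∈ Finset.range (K + 1), τ i ≤ 1) ∧
  (∀ i, 1 ≤ i → i ≤ K → εU i ≤ η i * gD i * ∑ j ∈ Finset.range i, εD j)

lemma rate_lt_rate_s18 {t t' x : ℝ} (ht : 0 < t) (htt' : t < t') (hx : 0 < x) :
    rate t x < rate t' x := by
  have ht' : 0 < t' := ht.trans htt'
  rw [rate, rate, if_pos ht, if_pos ht']
  have hxt : 0 < x / t := div_pos hx ht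
  have h1 : (1:ℝ) + x / t ∈ Set.Ioi (0:ℝ) := by simp [Set.mem_Ioi]; linarith
  have h2 : (1:ℝ) ∈ Set.Ioi (0:ℝ) := by simp
  have hne : (1:ℝ) + x / t ≠ 1 := by intro h; linarith [h]
  have ha : 0 < t / t' := div_pos ht ht'
  have hb : 0 < 1 - t / t' := by
    have : t / t' < 1 := (div_lt_one ht').mpr htt'
    linarith
  have hc := strictConcaveOn_log_Ioi.2 h1 h2 hne ha hb (by ring)
  simp only [smul_eq_mul, Real.log_one, mul_zero, mul_one, add_zero] at hc
  have harg : t / t' * (1 + x / t) + (1 - t / t') = 1 + x / t' := by field_simp; ring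
  rw [harg] at hc
  calc t * Real.log (1 + x / t) = t' * (t / t' * Real.log (1 + x / t)) := by field_simp
    _ < t' * Real.log (1 + x / t') := mul_lt_mul_of_pos_left hc ht'

/-- Every optimal point `(τ*, ε_D*, ε_U*)` of problem (P1) with finite storage
capacities satisfies `ε_{D,0}* = τ_0*·P_P`. -/
theorem stmt18 (K : ℕ) (hK : 1 ≤ K) (η gD gU σ2 B : ℕ → ℝ)
    (hη : ∀ i, 1 ≤ i → i ≤ K → 0 < η i) (hgD : ∀ i, 1 ≤ i → i ≤ K → 0 < gD i)
    (hgU : ∀ i, 1 ≤ i → i ≤ K → 0 < gU i) (hσ2 : ∀ i, 1 ≤ i → i ≤ K → 0 < σ2 i)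
    (hB : ∀ i, 1 ≤ i → i ≤ K → 0 < B i)
    (PA PP : ℝ) (hPA : 0 < PA) (hPP : PA < PP)
    (τ εD εU : ℕ → ℝ) (hfeas : FeasibleP1 K PA PP η gD B τ εD εU)
    (hopt : ∀ τ' εD' εU' : ℕ → ℝ, FeasibleP1 K PA PP η gD B τ' εD' εU' →
      ObjP1 K gU σ2 τ' εU' ≤ ObjP1 K gU σ2 τ εU) :
    εD 0 = τ 0 * PP := by
  classical
  have hPP0 : (0:ℝ) < PP := hPA.trans hPP
  obtain ⟨hτ, hεD, hεU, hsumD, hsumτ, hup⟩ := hfeas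
  -- Step A: a feasible point with positive objective
  set E0 : ℝ := min PA (PP / 2) with hE0def
  have hE0 : 0 < E0 := lt_min hPA (by linarith)
  set m : ℝ := min (B 1) (η 1 * gD 1 * E0) with hmdef
  have hm : 0 < m := lt_min (hB 1 le_rfl hK)
    (mul_pos (mul_pos (hη 1 le_rfl hK) (hgD 1 le_rfl hK)) hE0)
  set τ' : ℕ → ℝ := fun j => if j = 0 then 1/2 else if j = 1 then 1/2 else 0 with hτ'def
  set εD' : ℕ → ℝ := fun j => if j = 0 then E0 else 0 with hεD'def
  set εU' : ℕ → ℝ := fun j => if j = 1 then m else 0 with hεU'def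
  have h0mem : (0:ℕ) ∈ Finset.range (K+1) := by simp
  have h1mem : (1:ℕ) ∈ Finset.range (K+1) := by simp only [Finset.mem_range]; omega
  have hfeas' : FeasibleP1 K PA PP η gD B τ' εD' εU' := by
    refine ⟨?_, ?_, ?_, ?_, ?_, ?_⟩
    · intro i _
      rw [hτ'def]; dsimp only
      split
      · norm_num
      · split <;> norm_num
    · intro i _
      rw [hεD'def, hτ'def]; dsimp only
      rcases eq_or_ne i 0 with h | h
      · have hle : E0 ≤ PP / 2 := min_le_right _ _
        subst h
        norm_num
        exact ⟨hE0.le, by linarith⟩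
      · simp only [if_neg h]
        refine ⟨le_refl 0, ?_⟩
        split <;> positivity
    · intro i hi1 _
      rw [hεU'def]; dsimp only
      rcases eq_or_ne i 1 with h | h
      · simp only [h, if_pos rfl]
        exact ⟨hm.le, min_le_left _ _⟩
      · simp only [if_neg h]
        exact ⟨le_refl 0, (hB i hi1 ‹i ≤ K›).le⟩
    · rw [hεD'def]
      rw [Finset.sum_ite_eq' (Finset.range (K+1)) 0 (fun _ => E0)]
      simp only [h0mem, if_pos]
      exact min_le_left _ _
    · have hpt : ∀ j, τ' j = (if j = 0 then (1:ℝ)/2 else 0) + (if j = 1 then (1:ℝ)/2 else 0) := by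
        intro j
        rw [hτ'def]; dsimp only
        rcases eq_or_ne j 0 with h | h
        · subst h; norm_num
        · rcases eq_or_ne j 1 with h1 | h1
          · subst h1; norm_num
          · simp [h, h1]
      rw [Finset.sum_congr rfl (fun j _ => hpt j), Finset.sum_add_distrib,
        Finset.sum_ite_eq' (Finset.range (K+1)) 0 (fun _ => (1:ℝ)/2),
        Finset.sum_ite_eq' (Finset.range (K+1)) 1 (fun _ => (1:ℝ)/2)]
      simp only [h0mem, h1mem, if_pos]
      norm_num
    · intro i hi1 hiK
      have hεD'nonneg : ∀ j, 0 ≤ εD' j := by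
        intro j; rw [hεD'def]; dsimp only; split <;> [exact hE0.le; exact le_refl 0]
      have hsum0 : εD' 0 ≤ ∑ j ∈ Finset.range i, εD' j := by
        apply Finset.single_le_sum (fun j _ => hεD'nonneg j)
        simp only [Finset.mem_range]; omega
      have hεD'0 : εD' 0 = E0 := by simp [hεD'def]
      have hpos : 0 < η i * gD i := mul_pos (hη i hi1 hiK) (hgD i hi1 hiK)
      rw [hεU'def]; dsimp only
      rcases eq_or_ne i 1 with h | h
      · subst h
        calc m ≤ η 1 * gD 1 * E0 := min_le_right _ _
          _ ≤ η 1 * gD 1 * ∑ j ∈ Finset.range 1, εD' j := by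
              apply mul_le_mul_of_nonneg_left _ hpos.le
              rw [Finset.sum_range_one, hεD'0]
      · simp only [if_neg h]
        have : 0 ≤ ∑ j ∈ Finset.range i, εD' j :=
          Finset.sum_nonneg (fun j _ => hεD'nonneg j)
        positivity
  -- positive objective at witness
  have h1Icc : (1:ℕ) ∈ Finset.Icc 1 K := by simp [hK]
  have hcnonneg : ∀ i ∈ Finset.Icc 1 K, 0 ≤ gU i / σ2 i * εU' i := by
    intro i hi
    simp only [Finset.mem_Icc] at hi
    have := hgU i hi.1 hi.2
    have := hσ2 i hi.1 hi.2
    have : 0 ≤ εU' i := by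
      rw [hεU'def]; dsimp only; split <;> [exact hm.le; exact le_refl 0]
    positivity
  have hwitpos : 0 < ObjP1 K gU σ2 τ' εU' := by
    rw [ObjP1]
    apply Finset.sum_pos' (fun i hi => rate_nonneg (hcnonneg i hi))
    refine ⟨1, h1Icc, ?_⟩
    apply rate_pos
    · simp [hτ'def]
    · have hεU'1 : εU' 1 = m := by simp [hεU'def]
      rw [hεU'1]
      have := hgU 1 le_rfl hK
      have := hσ2 1 le_rfl hK
      positivity
  have hObjpos : 0 < ObjP1 K gU σ2 τ εU :=
    hwitpos.trans_le (hopt τ' εD' εU' hfeas')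
  -- Step B: extract an index with positive rate
  have hex : ∃ i ∈ Finset.Icc 1 K, (0:ℝ) < rate (τ i) (gU i / σ2 i * εU i) := by
    by_contra hcon
    push_neg at hcon
    have : ObjP1 K gU σ2 τ εU ≤ 0 := by
      rw [ObjP1]; exact Finset.sum_nonpos hcon
    linarith
  obtain ⟨i0, hi0mem, hi0⟩ := hex
  have hi01 : 1 ≤ i0 := (Finset.mem_Icc.mp hi0mem).1
  have hi0K : i0 ≤ K := (Finset.mem_Icc.mp hi0mem).2
  have hi0ne0 : i0 ≠ 0 := by omega
  have ht0 : 0 < τ i0 := by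
    by_contra h
    rw [rate, if_neg h] at hi0
    exact lt_irrefl 0 hi0
  have hx0 : 0 < gU i0 / σ2 i0 * εU i0 := by
    have hnn : 0 ≤ gU i0 / σ2 i0 * εU i0 := by
      have := hgU i0 hi01 hi0K
      have := hσ2 i0 hi01 hi0K
      have := (hεU i0 hi01 hi0K).1
      positivity
    rcases hnn.lt_or_eq with h | h
    · exact h
    · exfalso
      rw [rate, if_pos ht0, ← h] at hi0
      simp at hi0
  -- Step C: by contradiction
  by_contra hne
  have hlt : εD 0 < τ 0 * PP := lt_of_le_of_ne (hεD 0 (Nat.zero_le K)).2 hne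
  set δ : ℝ := τ 0 - εD 0 / PP with hδdef
  have hδ : 0 < δ := by
    rw [hδdef]
    have : εD 0 / PP < τ 0 := (div_lt_iff₀ hPP0).mpr (by linarith)
    linarith
  set τ'' : ℕ → ℝ := Function.update (Function.update τ 0 (εD 0 / PP)) i0 (τ i0 + δ)
    with hτ''def
  have hτ''i0 : τ'' i0 = τ i0 + δ := by rw [hτ''def, Function.update_self]
  have hτ''0 : τ'' 0 = εD 0 / PP := by
    rw [hτ''def, Function.update_of_ne (Ne.symm hi0ne0), Function.update_self]
  have hτ''other : ∀ j, j ≠ 0 → j ≠ i0 → τ'' j = τ j := by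
    intro j h0 hi
    rw [hτ''def, Function.update_of_ne hi, Function.update_of_ne h0]
  have hi0mem' : i0 ∈ Finset.range (K+1) := by simp [Nat.lt_succ_iff, hi0K]
  have h0mem' : (0:ℕ) ∈ Finset.range (K+1) \ {i0} := by
    simp [Ne.symm hi0ne0]
  have hsumτ'' : ∑ i ∈ Finset.range (K+1), τ'' i = ∑ i ∈ Finset.range (K+1), τ i := by
    rw [hτ''def, Finset.sum_update_of_mem hi0mem', Finset.sum_update_of_mem h0mem']
    rw [Finset.sum_eq_add_sum_sdiff_singleton_of_mem hi0mem' τ,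
      Finset.sum_eq_add_sum_sdiff_singleton_of_mem h0mem' τ]
    rw [hδdef]; ring
  have hfeas'' : FeasibleP1 K PA PP η gD B τ'' εD εU := by
    refine ⟨?_, ?_, hεU, hsumD, by rw [hsumτ''] ; exact hsumτ, hup⟩
    · intro i hiK
      rcases eq_or_ne i 0 with h | h
      · subst h; rw [hτ''0]; exact div_nonneg (hεD 0 (Nat.zero_le K)).1 hPP0.le
      · rcases eq_or_ne i i0 with h' | h'
        · subst h'; rw [hτ''i0]; linarith [hτ i hiK]
        · rw [hτ''other i h h']; exact hτ i hiK
    · intro i hiK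
      refine ⟨(hεD i hiK).1, ?_⟩
      rcases eq_or_ne i 0 with h | h
      · subst h; rw [hτ''0, div_mul_cancel₀ _ hPP0.ne']
      · rcases eq_or_ne i i0 with h' | h'
        · subst h'
          rw [hτ''i0]
          have := (hεD i hiK).2
          nlinarith
        · rw [hτ''other i h h']; exact (hεD i hiK).2
  have hobjlt : ObjP1 K gU σ2 τ εU < ObjP1 K gU σ2 τ'' εU := by
    rw [ObjP1, ObjP1]
    apply Finset.sum_lt_sum
    · intro i hi
      rcases eq_or_ne i i0 with h | h
      · subst h
        rw [hτ''i0]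
        exact (rate_lt_rate_s18 ht0 (by linarith) hx0).le
      · have hi1 : i ≠ 0 := by
          have := (Finset.mem_Icc.mp hi).1; omega
        rw [hτ''other i hi1 h]
    · refine ⟨i0, hi0mem, ?_⟩
      rw [hτ''i0]
      exact rate_lt_rate_s18 ht0 (by linarith) hx0
  linarith [hopt τ'' εD εU hfeas'']
end
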